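/- Let η₁,…,ηₘ be i.i.d. with E[η]=0, E[η²]=1, E[η⁴]<∞, q = η₁+⋯+ηₘ, and define Γ̃(x,m) = log E[exp(x(1 − q²/m))] for x ≥ 0. Then Γ̃(x,m) ≤ x for x ≥ 1, and Γ̃(x,m) ≤ χ₁ x² for 0 ≤ x < 1, where χ₁ = E[η⁴] + 1. In particular Γ̃(x,m) ≤ max(1, χ₁)·x² for all x ≥ 0. -/

import Mathlib

open MeasureTheory ProbabilityTheory Finset

lemma exp_le_quad {t : ℝ} (ht : t ≤ 1) : Real.exp t ≤ 1 + t + t ^ 2 := by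
  rcases le_or_gt (-1) t with h | h
  · have habs : |t| ≤ 1 := abs_le.2 ⟨h, ht⟩
    have := Real.exp_bound habs (by norm_num : 0 < 2)
    have h2 : |Real.exp t - (1 + t)| ≤ |t| ^ 2 * (3 / 4) := by
      convert this using 2
      · simp [Finset.sum_range_succ]
      · norm_num
    have h3 : Real.exp t - (1 + t) ≤ |t| ^ 2 * (3/4) := (abs_le.1 h2).2
    have h4 : |t| ^ 2 = t ^ 2 := sq_abs t
    nlinarith [sq_nonneg t]
  · have h1 : Real.exp t ≤ Real.exp (-1) := Real.exp_le_exp.2 h.le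
    have h2 : Real.exp (-1) < 1 := by
      rw [Real.exp_lt_one_iff]; norm_num
    nlinarith [sq_nonneg (1 + t)]

lemma integrable_pow_le' {Ω : Type*} [MeasurableSpace Ω] {μ : Measure Ω} [IsProbabilityMeasure μ]
    {f : Ω → ℝ} (hf : Measurable f) (h4 : Integrable (fun ω => f ω ^ 4) μ)
    {k : ℕ} (hk : k ≤ 4) : Integrable (fun ω => f ω ^ k) μ := by
  refine Integrable.mono' (h4.add (integrable_const 1)) ((hf.pow_const k).aestronglyMeasurable) ?_
  refine Filter.Eventually.of_forall fun ω => ?_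
  have h1 : |f ω ^ k| = |f ω| ^ k := by rw [abs_pow]
  rw [Real.norm_eq_abs, h1]
  show |f ω| ^ k ≤ f ω ^ 4 + 1
  rcases le_or_gt (|f ω|) 1 with h | h
  · have : |f ω| ^ k ≤ 1 := pow_le_one₀ (abs_nonneg _) h
    nlinarith [sq_nonneg (f ω ^ 2), sq_nonneg (f ω)]
  · have : |f ω| ^ k ≤ |f ω| ^ 4 := pow_le_pow_right₀ h.le hk
    have h2 : |f ω| ^ 4 = f ω ^ 4 := by rw [← abs_pow]; exact abs_of_nonneg (by positivity)
    linarith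

lemma aux_moments {Ω : Type*} [MeasurableSpace Ω] (μ : Measure Ω) [IsProbabilityMeasure μ]
    (η : ℕ → Ω → ℝ)
    (hmeas : ∀ i, Measurable (η i))
    (hindep : iIndepFun η μ)
    (hident : ∀ i, IdentDistrib (η i) (η 0) μ μ)
    (hmean : μ[η 0] = 0)
    (hvar : μ[fun ω => (η 0 ω) ^ 2] = 1)
    (hmom4 : Integrable (fun ω => (η 0 ω) ^ 4) μ) (n : ℕ) :
    Integrable (fun ω => (∑ j ∈ Finset.range n, η j ω) ^ 4) μ ∧
    (∫ ω, (∑ j ∈ Finset.range n, η j ω) ∂μ = 0) ∧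
    (∫ ω, (∑ j ∈ Finset.range n, η j ω) ^ 2 ∂μ = n) ∧
    (∫ ω, (∑ j ∈ Finset.range n, η j ω) ^ 4 ∂μ
      = n * (μ[fun ω => (η 0 ω) ^ 4]) + 3 * n * (n - 1)) := by
  set E4 := μ[fun ω => (η 0 ω) ^ 4] with hE4def
  have hident_pow : ∀ i k, IdentDistrib (fun ω => η i ω ^ k) (fun ω => η 0 ω ^ k) μ μ :=
    fun i k => (hident i).comp (measurable_id.pow_const k)
  have hint_eta : ∀ i, ∀ k ≤ 4, Integrable (fun ω => η i ω ^ k) μ := fun i k hk =>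
    ((hident_pow i k).integrable_iff).2 (integrable_pow_le' (hmeas 0) hmom4 hk)
  have hmom_eta : ∀ i k, ∫ ω, η i ω ^ k ∂μ = ∫ ω, η 0 ω ^ k ∂μ :=
    fun i k => (hident_pow i k).integral_eq
  have hE1 : ∀ i, ∫ ω, η i ω ∂μ = 0 := fun i => by
    have := (hident i).integral_eq; rw [this]; exact hmean
  have hE2 : ∀ i, ∫ ω, η i ω ^ 2 ∂μ = 1 := fun i => by rw [hmom_eta i 2]; exact hvar
  have hE4i : ∀ i, ∫ ω, η i ω ^ 4 ∂μ = E4 := fun i => hmom_eta i 4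
  induction n with
  | zero => simp
  | succ n ih =>
    obtain ⟨ihInt, ih1, ih2, ih4⟩ := ih
    set G : Ω → ℝ := ∑ j ∈ Finset.range n, η j with hGdef
    have hGapp : ∀ ω, G ω = ∑ j ∈ Finset.range n, η j ω := fun ω => by
      simp [hGdef]
    have hGmeas : Measurable G := by
      rw [show G = fun ω => ∑ j ∈ Finset.range n, η j ω from funext hGapp]
      exact Finset.measurable_sum _ fun i _ => hmeas i
    have hG4 : Integrable (fun ω => G ω ^ 4) μ := by
      simpa only [hGapp] using ihInt
    have hGk : ∀ k ≤ 4, Integrable (fun ω => G ω ^ k) μ := fun k hk =>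
      integrable_pow_le' hGmeas hG4 hk
    have hIF : IndepFun G (η n) μ := hindep.indepFun_sum_range_succ hmeas n
    have hcomp : ∀ a b : ℕ, IndepFun (fun ω => G ω ^ a) (fun ω => η n ω ^ b) μ := fun a b =>
      hIF.comp (measurable_id.pow_const a) (measurable_id.pow_const b)
    have hprodInt : ∀ a ≤ 4, ∀ b ≤ 4, Integrable (fun ω => G ω ^ a * η n ω ^ b) μ :=
      fun a ha b hb => (hcomp a b).integrable_mul (hGk a ha) (hint_eta n b hb)
    have hprodVal : ∀ a b : ℕ, ∫ ω, G ω ^ a * η n ω ^ b ∂μ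
        = (∫ ω, G ω ^ a ∂μ) * ∫ ω, η n ω ^ b ∂μ := fun a b =>
      (hcomp a b).integral_fun_mul_eq_mul_integral (hGmeas.pow_const a).aestronglyMeasurable
        ((hmeas n).pow_const b).aestronglyMeasurable
    have hsum : ∀ ω, ∑ j ∈ Finset.range (n + 1), η j ω = G ω + η n ω := fun ω => by
      rw [Finset.sum_range_succ, hGapp]
    -- integrals of G powers from IH
    have hG1 : ∫ ω, G ω ∂μ = 0 := by
      rw [show (fun ω => G ω) = fun ω => ∑ j ∈ Finset.range n, η j ω from funext hGapp]; exact ih1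
    have hG2v : ∫ ω, G ω ^ 2 ∂μ = n := by
      rw [show (fun ω => G ω ^ 2) = fun ω => (∑ j ∈ Finset.range n, η j ω) ^ 2 from
        funext fun ω => by rw [hGapp]]; exact ih2
    have hG4v : ∫ ω, G ω ^ 4 ∂μ = n * E4 + 3 * n * (n - 1) := by
      rw [show (fun ω => G ω ^ 4) = fun ω => (∑ j ∈ Finset.range n, η j ω) ^ 4 from
        funext fun ω => by rw [hGapp]]; exact ih4
    -- expansion of fourth power
    have hexp4 : ∀ ω, (G ω + η n ω) ^ 4 = G ω ^ 4 + (4 * (G ω ^ 3 * η n ω) +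
        (6 * (G ω ^ 2 * η n ω ^ 2) + (4 * (G ω * η n ω ^ 3) + η n ω ^ 4))) := fun ω => by ring
    have hexp2 : ∀ ω, (G ω + η n ω) ^ 2 = G ω ^ 2 + (2 * (G ω * η n ω) + η n ω ^ 2) :=
      fun ω => by ring
    have hP31 := hprodVal 3 1
    have hP22 := hprodVal 2 2
    have hP13 := hprodVal 1 3
    have hP11 := hprodVal 1 1
    simp only [pow_one] at hP31 hP22 hP13 hP11
    have int31 := hprodInt 3 (by norm_num) 1 (by norm_num)
    have int22 := hprodInt 2 (by norm_num) 2 (by norm_num)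
    have int13 := hprodInt 1 (by norm_num) 3 (by norm_num)
    have int11 := hprodInt 1 (by norm_num) 1 (by norm_num)
    simp only [pow_one] at int31 int22 int13 int11
    have intG1 : Integrable G μ := by simpa using hGk 1 (by norm_num)
    have intG2 : Integrable (fun ω => G ω ^ 2) μ := hGk 2 (by norm_num)
    have intE1 : Integrable (η n) μ := by simpa using hint_eta n 1 (by norm_num)
    have intE2 : Integrable (fun ω => η n ω ^ 2) μ := hint_eta n 2 (by norm_num)
    have intE4 : Integrable (fun ω => η n ω ^ 4) μ := hint_eta n 4 (by norm_num)
    have intR2 : Integrable (fun ω => 2 * (G ω * η n ω) + η n ω ^ 2) μ :=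
      (int11.const_mul 2).add intE2
    have intR4c : Integrable (fun ω => 4 * (G ω * η n ω ^ 3) + η n ω ^ 4) μ :=
      (int13.const_mul 4).add intE4
    have intR4b : Integrable (fun ω => 6 * (G ω ^ 2 * η n ω ^ 2) +
        (4 * (G ω * η n ω ^ 3) + η n ω ^ 4)) μ := (int22.const_mul 6).add intR4c
    have intR4a : Integrable (fun ω => 4 * (G ω ^ 3 * η n ω) + (6 * (G ω ^ 2 * η n ω ^ 2) +
        (4 * (G ω * η n ω ^ 3) + η n ω ^ 4))) μ := (int31.const_mul 4).add intR4b
    have intSum4 : Integrable (fun ω => (G ω + η n ω) ^ 4) μ := by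
      rw [show (fun ω => (G ω + η n ω) ^ 4) = fun ω => G ω ^ 4 + (4 * (G ω ^ 3 * η n ω) +
        (6 * (G ω ^ 2 * η n ω ^ 2) + (4 * (G ω * η n ω ^ 3) + η n ω ^ 4))) from
        funext hexp4]
      exact hG4.add intR4a
    refine ⟨?_, ?_, ?_, ?_⟩
    · rw [show (fun ω => (∑ j ∈ Finset.range (n+1), η j ω) ^ 4)
        = fun ω => (G ω + η n ω) ^ 4 from funext fun ω => by rw [hsum]]
      exact intSum4
    · rw [show (fun ω => (∑ j ∈ Finset.range (n+1), η j ω))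
        = fun ω => G ω + η n ω from funext fun ω => by rw [hsum]]
      rw [integral_add intG1 intE1, hG1, hE1 n]; norm_num
    · rw [show (fun ω => (∑ j ∈ Finset.range (n+1), η j ω) ^ 2)
        = fun ω => G ω ^ 2 + (2 * (G ω * η n ω) + η n ω ^ 2) from
        funext fun ω => by rw [hsum, hexp2]]
      rw [integral_add intG2 intR2,
        integral_add (int11.const_mul 2) intE2, integral_const_mul _ _, hP11, hG1, hG2v,
        hE1 n, hE2 n]
      push_cast; ring
    · rw [show (fun ω => (∑ j ∈ Finset.range (n+1), η j ω) ^ 4)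
        = fun ω => G ω ^ 4 + (4 * (G ω ^ 3 * η n ω) +
          (6 * (G ω ^ 2 * η n ω ^ 2) + (4 * (G ω * η n ω ^ 3) + η n ω ^ 4))) from
        funext fun ω => by rw [hsum, hexp4]]
      rw [integral_add hG4 intR4a,
        integral_add (int31.const_mul 4) intR4b,
        integral_add (int22.const_mul 6) intR4c,
        integral_add (int13.const_mul 4) intE4,
        integral_const_mul _ _, integral_const_mul _ _, integral_const_mul _ _,
        hP31, hP22, hP13, hG1, hG2v, hG4v, hE1 n, hE2 n, hE4i n]
      push_cast; ring

theorem main_test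
    {Ω : Type*} [MeasurableSpace Ω] (μ : Measure Ω) [IsProbabilityMeasure μ]
    (η : ℕ → Ω → ℝ)
    (hmeas : ∀ i, Measurable (η i))
    (hindep : iIndepFun η μ)
    (hident : ∀ i, IdentDistrib (η i) (η 0) μ μ)
    (hmean : μ[η 0] = 0)
    (hvar : μ[fun ω => (η 0 ω) ^ 2] = 1)
    (hmom4 : Integrable (fun ω => (η 0 ω) ^ 4) μ)
    (m : ℕ) (hm : 1 ≤ m)
    (hSint4 : Integrable (fun ω => (∑ j ∈ Finset.range m, η j ω) ^ 4) μ)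
    (hS2 : ∫ ω, (∑ j ∈ Finset.range m, η j ω) ^ 2 ∂μ = m)
    (hS4 : ∫ ω, (∑ j ∈ Finset.range m, η j ω) ^ 4 ∂μ
      = m * (μ[fun ω => (η 0 ω) ^ 4]) + 3 * m * (m - 1))
    (Γ : ℝ → ℝ)
    (hΓ : ∀ x, Γ x = Real.log
      (μ[fun ω => Real.exp (x * (1 - (∑ i ∈ Finset.range m, η i ω) ^ 2 / m))])) :
    (∀ x : ℝ, 1 ≤ x → Γ x ≤ x)
    ∧ (∀ x : ℝ, 0 ≤ x → x < 1 → Γ x ≤ (μ[fun ω => (η 0 ω) ^ 4] + 1) * x ^ 2)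
    ∧ (∀ x : ℝ, 0 ≤ x → Γ x ≤ max 1 (μ[fun ω => (η 0 ω) ^ 4] + 1) * x ^ 2) := by
  have hm' : (0:ℝ) < m := by exact_mod_cast hm
  have hm1 : (1:ℝ) ≤ m := by exact_mod_cast hm
  set E4 := μ[fun ω => (η 0 ω) ^ 4] with hE4def
  set S : Ω → ℝ := fun ω => ∑ i ∈ Finset.range m, η i ω with hSdef
  set Z : Ω → ℝ := fun ω => 1 - S ω ^ 2 / m with hZdef
  have hSmeas : Measurable S := Finset.measurable_sum _ fun i _ => hmeas i
  have hZmeas : Measurable Z :=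
    Measurable.sub measurable_const ((hSmeas.pow_const 2).div_const _)
  have hZle1 : ∀ ω, Z ω ≤ 1 := fun ω => by
    have : 0 ≤ S ω ^ 2 / m := by positivity
    simp only [hZdef]; linarith
  have hS2int : Integrable (fun ω => S ω ^ 2) μ := integrable_pow_le' hSmeas hSint4 (by norm_num)
  -- E4 ≥ 1
  have hE4ge1 : 1 ≤ E4 := by
    have hle : ∀ ω, 2 * η 0 ω ^ 2 ≤ η 0 ω ^ 4 + 1 := fun ω => by nlinarith [sq_nonneg (η 0 ω ^ 2 - 1)]
    have hint2 : Integrable (fun ω => 2 * η 0 ω ^ 2) μ :=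
      (integrable_pow_le' (hmeas 0) hmom4 (by norm_num : (2:ℕ) ≤ 4)).const_mul 2
    have h41 : Integrable (fun ω => η 0 ω ^ 4 + 1) μ := hmom4.add (integrable_const 1)
    have := integral_mono hint2 h41 hle
    rw [integral_const_mul _ _, integral_add hmom4 (integrable_const 1)] at this
    simp only [integral_const, measure_univ, ENNReal.toReal_one, probReal_univ, smul_eq_mul, one_mul] at this
    rw [hvar] at this
    simp only [← hE4def] at this
    linarith
  -- mean of Z
  have hZint : Integrable Z μ := (integrable_const 1).sub (hS2int.div_const _)
  have hZmean : ∫ ω, Z ω ∂μ = 0 := by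
    have : ∫ ω, Z ω ∂μ = ∫ ω, (1 - S ω ^ 2 / m) ∂μ := rfl
    rw [this, integral_sub (integrable_const 1) (hS2int.div_const _), integral_div]
    simp only [integral_const, measure_univ, ENNReal.toReal_one, probReal_univ, smul_eq_mul, one_mul]
    rw [hS2]
    field_simp
    norm_num
  -- second moment of Z
  have hZ2exp : ∀ ω, Z ω ^ 2 = 1 - 2 * (S ω ^ 2 / m) + S ω ^ 4 / (m:ℝ)^2 := fun ω => by
    simp only [hZdef]; field_simp; ring
  have hZ2int : Integrable (fun ω => Z ω ^ 2) μ := by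
    rw [show (fun ω => Z ω ^ 2) = fun ω => 1 - 2 * (S ω ^ 2 / m) + S ω ^ 4 / (m:ℝ)^2 from
      funext hZ2exp]
    exact ((integrable_const 1).sub ((hS2int.div_const _).const_mul 2)).add
      (hSint4.div_const _)
  have hS2' : ∫ ω, S ω ^ 2 ∂μ = m := hS2
  have hS4' : ∫ ω, S ω ^ 4 ∂μ = ↑m * E4 + 3 * ↑m * (↑m - 1) := hS4
  have hSint4' : Integrable (fun ω => S ω ^ 4) μ := hSint4
  have hZ2val : ∫ ω, Z ω ^ 2 ∂μ = E4 / m + 2 - 3 / m := by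
    rw [show (fun ω => Z ω ^ 2) = fun ω => (1 - 2 * (S ω ^ 2 / m)) + S ω ^ 4 / (m:ℝ)^2 from
      funext fun ω => by rw [hZ2exp ω]]
    have hA : Integrable (fun ω => 1 - 2 * (S ω ^ 2 / (m:ℝ))) μ :=
      (integrable_const 1).sub ((hS2int.div_const _).const_mul 2)
    have hB : Integrable (fun ω => S ω ^ 4 / (m:ℝ) ^ 2) μ := hSint4'.div_const _
    rw [integral_add hA hB,
      integral_sub (integrable_const 1) ((hS2int.div_const _).const_mul 2),
      integral_const_mul _ _, integral_div, integral_div, hS2', hS4']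
    simp only [integral_const, measure_univ, ENNReal.toReal_one, probReal_univ, smul_eq_mul, one_mul]
    field_simp
    ring
  have hZ2le : ∫ ω, Z ω ^ 2 ∂μ ≤ E4 + 1 := by
    rw [hZ2val]
    have heq : E4 / ↑m + 2 - 3 / ↑m = (E4 + 2 * ↑m - 3) / ↑m := by field_simp
    rw [heq, div_le_iff₀ hm']
    nlinarith
  -- integrability of exp
  have hexpint : ∀ x : ℝ, 0 ≤ x → Integrable (fun ω => Real.exp (x * Z ω)) μ := by
    intro x hx
    refine Integrable.mono' (integrable_const (Real.exp x)) ?_ ?_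
    · exact ((hZmeas.const_mul x).exp).aestronglyMeasurable
    · refine Filter.Eventually.of_forall fun ω => ?_
      rw [Real.norm_eq_abs, abs_of_pos (Real.exp_pos _), Real.exp_le_exp]
      calc x * Z ω ≤ x * 1 := by
            exact mul_le_mul_of_nonneg_left (hZle1 ω) hx
        _ = x := mul_one x
  have hexp_nonneg : ∀ x : ℝ, 0 ≤ ∫ ω, Real.exp (x * Z ω) ∂μ := fun x =>
    integral_nonneg fun ω => (Real.exp_pos _).le
  have hΓ' : ∀ x, Γ x = Real.log (∫ ω, Real.exp (x * Z ω) ∂μ) := fun x => hΓ x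
  -- Part 1
  have part1 : ∀ x : ℝ, 1 ≤ x → Γ x ≤ x := by
    intro x hx
    have hx0 : (0:ℝ) ≤ x := by linarith
    have hEle : ∫ ω, Real.exp (x * Z ω) ∂μ ≤ Real.exp x := by
      have := integral_mono (hexpint x hx0) (integrable_const (Real.exp x))
        (fun ω => by
          rw [Real.exp_le_exp]
          calc x * Z ω ≤ x * 1 := mul_le_mul_of_nonneg_left (hZle1 ω) hx0
            _ = x := mul_one x)
      simpa using this
    rw [hΓ' x]
    rcases eq_or_lt_of_le (hexp_nonneg x) with h | h
    · rw [← h, Real.log_zero]; linarith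
    · rw [Real.log_le_iff_le_exp h]; exact hEle
  -- Part 2
  have part2 : ∀ x : ℝ, 0 ≤ x → x < 1 → Γ x ≤ (E4 + 1) * x ^ 2 := by
    intro x hx0 hx1
    have hbnd : ∀ ω, Real.exp (x * Z ω) ≤ 1 + (x * Z ω + x ^ 2 * Z ω ^ 2) := by
      intro ω
      have harg : x * Z ω ≤ 1 := by
        calc x * Z ω ≤ x * 1 := mul_le_mul_of_nonneg_left (hZle1 ω) hx0
          _ = x := mul_one x
          _ ≤ 1 := hx1.le
      have := exp_le_quad harg
      calc Real.exp (x * Z ω) ≤ 1 + x * Z ω + (x * Z ω) ^ 2 := this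
        _ = 1 + (x * Z ω + x ^ 2 * Z ω ^ 2) := by ring
    have hintR2 : Integrable (fun ω => x * Z ω + x ^ 2 * Z ω ^ 2) μ :=
      (hZint.const_mul x).add (hZ2int.const_mul (x ^ 2))
    have hintR : Integrable (fun ω => 1 + (x * Z ω + x ^ 2 * Z ω ^ 2)) μ :=
      (integrable_const 1).add hintR2
    have hEle : ∫ ω, Real.exp (x * Z ω) ∂μ ≤ 1 + (E4 + 1) * x ^ 2 := by
      have h1 := integral_mono (hexpint x hx0) hintR hbnd
      rw [integral_add (integrable_const 1) hintR2,
        integral_add (hZint.const_mul x) (hZ2int.const_mul (x ^ 2)),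
        integral_const_mul _ _, integral_const_mul _ _, hZmean] at h1
      simp only [integral_const, measure_univ, ENNReal.toReal_one, probReal_univ, smul_eq_mul, one_mul,
        mul_zero, zero_add] at h1
      have h2 : x ^ 2 * ∫ ω, Z ω ^ 2 ∂μ ≤ x ^ 2 * (E4 + 1) :=
        mul_le_mul_of_nonneg_left hZ2le (by positivity)
      calc ∫ ω, Real.exp (x * Z ω) ∂μ ≤ 1 + x ^ 2 * ∫ ω, Z ω ^ 2 ∂μ := h1
        _ ≤ 1 + x ^ 2 * (E4 + 1) := by linarith
        _ = 1 + (E4 + 1) * x ^ 2 := by ring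
    rw [hΓ' x]
    have hrhs : 0 ≤ (E4 + 1) * x ^ 2 := by positivity
    rcases eq_or_lt_of_le (hexp_nonneg x) with h | h
    · rw [← h, Real.log_zero]; exact hrhs
    · have := Real.log_le_sub_one_of_pos h
      linarith
  refine ⟨part1, part2, ?_⟩
  intro x hx0
  rcases lt_or_ge x 1 with h | h
  · calc Γ x ≤ (E4 + 1) * x ^ 2 := part2 x hx0 h
      _ ≤ max 1 (E4 + 1) * x ^ 2 := by
        apply mul_le_mul_of_nonneg_right (le_max_right _ _) (by positivity)
  · calc Γ x ≤ x := part1 x h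
      _ ≤ x ^ 2 := by nlinarith
      _ = 1 * x ^ 2 := (one_mul _).symm
      _ ≤ max 1 (E4 + 1) * x ^ 2 := by
        apply mul_le_mul_of_nonneg_right (le_max_left _ _) (by positivity)

theorem log_laplace_bound_centered_square
    {Ω : Type*} [MeasurableSpace Ω] (μ : Measure Ω) [IsProbabilityMeasure μ]
    (η : ℕ → Ω → ℝ)
    (hmeas : ∀ i, Measurable (η i))
    (hindep : iIndepFun η μ)
    (hident : ∀ i, IdentDistrib (η i) (η 0) μ μ)
    (hmean : μ[η 0] = 0)
    (hvar : μ[fun ω => (η 0 ω) ^ 2] = 1)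
    (hmom4 : Integrable (fun ω => (η 0 ω) ^ 4) μ)
    (m : ℕ) (hm : 1 ≤ m)
    (Γ : ℝ → ℝ)
    (hΓ : ∀ x, Γ x = Real.log
      (μ[fun ω => Real.exp (x * (1 - (∑ i ∈ Finset.range m, η i ω) ^ 2 / m))])) :
    (∀ x : ℝ, 1 ≤ x → Γ x ≤ x)
    ∧ (∀ x : ℝ, 0 ≤ x → x < 1 → Γ x ≤ (μ[fun ω => (η 0 ω) ^ 4] + 1) * x ^ 2)
    ∧ (∀ x : ℝ, 0 ≤ x → Γ x ≤ max 1 (μ[fun ω => (η 0 ω) ^ 4] + 1) * x ^ 2) := by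
  obtain ⟨hSint4, -, hS2, hS4⟩ := aux_moments μ η hmeas hindep hident hmean hvar hmom4 m
  exact main_test μ η hmeas hindep hident hmean hvar hmom4 m hm hSint4 hS2 hS4 Γ hΓ
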